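/- arXiv:1811.04527 — 3 statements merged into one kernel-verified Lean document; each statement's English description precedes it below -/
import Mathlib

section
/- Let γ > 0, n ≥ 1, and let φ : [0,∞) → ℝⁿ be continuous with ‖φ(t)‖ ≤ B for all t ≥ 0 for some B > 0. Suppose φ is persistently exciting: there exist α₁ > 0 and T > 0 such that for all t ≥ 0, ∫_{t}^{t+T} φ(τ) φ(τ)ᵀ dτ − α₁ I is positive semidefinite. Then there exist ρ > 0 and λ > 0 such that every differentiable θ̃ : [0,∞) → ℝⁿ satisfying θ̃'(t) = −γ φ(t) (φ(t)ᵀ θ̃(t)) obeys ‖θ̃(t)‖ ≤ ρ e^{−λ(t−t₀)} ‖θ̃(t₀)‖ for all t ≥ t₀ ≥ 0. -/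
open scoped RealInnerProductSpace
open MeasureTheory Set intervalIntegral

private lemma cs_aux {f : ℝ → ℝ} {a b : ℝ} (hab : a ≤ b)
    (hf : ContinuousOn f (Set.Icc a b)) :
    (∫ τ in a..b, |f τ|) ^ 2 ≤ (b - a) * ∫ τ in a..b, f τ ^ 2 := by
  rcases eq_or_lt_of_le hab with h | h
  · subst h; simp
  · have hd0 : 0 < b - a := by linarith
    have huIcc : Set.uIcc a b = Set.Icc a b := Set.uIcc_of_le hab
    have hfi : IntervalIntegrable f volume a b := (huIcc ▸ hf).intervalIntegrable
    have hfabs : IntervalIntegrable (fun τ => |f τ|) volume a b := hfi.abs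
    have hf2 : IntervalIntegrable (fun τ => f τ ^ 2) volume a b := by
      apply ContinuousOn.intervalIntegrable; rw [huIcc]; exact hf.pow 2
    set I : ℝ := ∫ τ in a..b, |f τ| with hI
    set S : ℝ := ∫ τ in a..b, f τ ^ 2 with hS
    set c : ℝ := I / (b - a) with hcdef
    have hexp : ∀ τ : ℝ, (|f τ| - c) ^ 2 = f τ ^ 2 - 2 * c * |f τ| + c ^ 2 := by
      intro τ; have h1 : |f τ| ^ 2 = f τ ^ 2 := sq_abs _
      nlinarith [h1]
    have hval : (∫ τ in a..b, (|f τ| - c) ^ 2)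
        = S - 2 * c * I + (b - a) * c ^ 2 := by
      simp_rw [hexp]
      rw [intervalIntegral.integral_add (hf2.sub (hfabs.const_mul (2 * c)))
            intervalIntegrable_const,
          intervalIntegral.integral_sub hf2 (hfabs.const_mul (2 * c)),
          intervalIntegral.integral_const_mul, intervalIntegral.integral_const,
          smul_eq_mul]
    have h0 : (0:ℝ) ≤ ∫ τ in a..b, (|f τ| - c) ^ 2 :=
      intervalIntegral.integral_nonneg hab (fun x _ => sq_nonneg _)
    rw [hval] at h0
    have hcd : c * (b - a) = I := div_mul_cancel₀ _ (ne_of_gt hd0)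
    nlinarith [h0, hcd, hd0]

private lemma deriv_g {n : ℕ} {γ : ℝ} (φ tθ : ℝ → EuclideanSpace ℝ (Fin n))
    (hθ : ∀ t ≥ (0:ℝ), HasDerivAt tθ (-(γ * ⟪φ t, tθ t⟫) • φ t) t)
    {s : ℝ} (hs : 0 ≤ s) :
    HasDerivAt (fun r => ‖tθ r‖ ^ 2) (-(2 * γ) * ⟪φ s, tθ s⟫ ^ 2) s := by
  have h1 := (hθ s hs).inner ℝ (hθ s hs)
  have h2 : ⟪tθ s, -(γ * ⟪φ s, tθ s⟫) • φ s⟫ + ⟪-(γ * ⟪φ s, tθ s⟫) • φ s, tθ s⟫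
      = -(2 * γ) * ⟪φ s, tθ s⟫ ^ 2 := by
    rw [real_inner_smul_right, real_inner_smul_left, real_inner_comm (tθ s) (φ s)]
    ring
  have h3 : (fun r => ‖tθ r‖ ^ 2) = fun r => ⟪tθ r, tθ r⟫ := by
    funext r; rw [real_inner_self_eq_norm_sq]
  rw [h3, ← h2]
  exact h1

private lemma quad_form {n : ℕ} (φ : ℝ → EuclideanSpace ℝ (Fin n))
    (hφ : ContinuousOn φ (Set.Ici 0)) {α₁ T : ℝ} (hT : 0 < T)
    {t : ℝ} (ht : 0 ≤ t)
    (hPE : Matrix.PosSemidef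
        ((Matrix.of fun i j => ∫ τ in t..t + T, φ τ i * φ τ j) -
          α₁ • (1 : Matrix (Fin n) (Fin n) ℝ)))
    (x : EuclideanSpace ℝ (Fin n)) :
    α₁ * ‖x‖ ^ 2 ≤ ∫ τ in t..t + T, ⟪φ τ, x⟫ ^ 2 := by
  have hsub : Set.uIcc t (t + T) ⊆ Set.Ici 0 := by
    rw [Set.uIcc_of_le (by linarith)]
    exact fun τ hτ => le_trans ht hτ.1
  have hcont : ∀ i : Fin n, ContinuousOn (fun τ => φ τ i) (Set.uIcc t (t + T)) :=
    fun i => (by fun_prop : Continuous (fun v : EuclideanSpace ℝ (Fin n) => v i)).comp_continuousOn (hφ.mono hsub)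
  have hint : ∀ i j : Fin n,
      IntervalIntegrable (fun τ => φ τ i * φ τ j) volume t (t + T) :=
    fun i j => ((hcont i).mul (hcont j)).intervalIntegrable
  have h := hPE.dotProduct_mulVec_nonneg x.ofLp
  have hx2 : ‖x‖ ^ 2 = ∑ i, x i * x i := by
    rw [← real_inner_self_eq_norm_sq, PiLp.inner_apply]
    simp [RCLike.inner_apply, sq]
  have hdot : ∀ y : Fin n → ℝ, dotProduct (star y)
      ((((Matrix.of fun i j => ∫ τ in t..t + T, φ τ i * φ τ j) -
        α₁ • (1 : Matrix (Fin n) (Fin n) ℝ))).mulVec y)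
      = (∑ i, ∑ j, (y i * y j) * ∫ τ in t..t + T, φ τ i * φ τ j) -
        α₁ * ∑ i, y i * y i := by
    intro y
    simp only [dotProduct, Matrix.mulVec, star_trivial, Pi.star_apply,
      Matrix.sub_apply, Matrix.smul_apply, Matrix.one_apply, Matrix.of_apply,
      smul_eq_mul, mul_ite, mul_zero, ite_mul, zero_mul, mul_sub, sub_mul,
      Finset.sum_sub_distrib, Finset.sum_ite_eq, Finset.mem_univ, if_true,
      Finset.mul_sum]
    congr 1
    · apply Finset.sum_congr rfl; intro i _
      apply Finset.sum_congr rfl; intro j _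
      ring
    · apply Finset.sum_congr rfl; intro i _
      ring
  have hInt : (∫ τ in t..t + T, ⟪φ τ, x⟫ ^ 2)
      = ∑ i, ∑ j, (x i * x j) * ∫ τ in t..t + T, φ τ i * φ τ j := by
    have expand : ∀ τ : ℝ,
        ⟪φ τ, x⟫ ^ 2 = ∑ i, ∑ j, (x i * x j) * (φ τ i * φ τ j) := by
      intro τ
      have hi : ⟪φ τ, x⟫ = ∑ i, φ τ i * x i := by
        rw [PiLp.inner_apply]; simp [RCLike.inner_apply, mul_comm]
      rw [hi, sq, Finset.sum_mul_sum]
      apply Finset.sum_congr rfl; intro i _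
      apply Finset.sum_congr rfl; intro j _
      ring
    simp_rw [expand]
    rw [intervalIntegral.integral_finset_sum
        (fun i _ => ContinuousOn.intervalIntegrable (by
          apply continuousOn_finset_sum
          intro j _
          exact continuousOn_const.mul ((hcont i).mul (hcont j))))]
    · apply Finset.sum_congr rfl; intro i _
      rw [intervalIntegral.integral_finset_sum (fun j _ => (hint i j).const_mul _)]
      exact Finset.sum_congr rfl fun j _ => intervalIntegral.integral_const_mul _ _
  rw [hdot x.ofLp] at h
  rw [hInt, hx2]
  linarith

private lemma step_lemma {n : ℕ} {γ B α₁ T : ℝ} (hγ : 0 < γ) (hB : 0 < B)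
    (hT : 0 < T)
    (φ : ℝ → EuclideanSpace ℝ (Fin n)) (hφ : ContinuousOn φ (Set.Ici 0))
    (hφB : ∀ t ≥ (0:ℝ), ‖φ t‖ ≤ B)
    (hQ : ∀ t ≥ (0:ℝ), ∀ x : EuclideanSpace ℝ (Fin n),
       α₁ * ‖x‖ ^ 2 ≤ ∫ τ in t..t + T, ⟪φ τ, x⟫ ^ 2)
    (tθ : ℝ → EuclideanSpace ℝ (Fin n))
    (hθ : ∀ t ≥ (0:ℝ), HasDerivAt tθ (-(γ * ⟪φ t, tθ t⟫) • φ t) t)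
    {t : ℝ} (ht : 0 ≤ t) :
    ‖tθ (t + T)‖ ^ 2 ≤
      (1 - 2 * γ * α₁ / (2 + 2 * γ ^ 2 * B ^ 4 * T ^ 2)) * ‖tθ t‖ ^ 2 := by
  have htT : t ≤ t + T := by linarith
  have huIcc : Set.uIcc t (t + T) = Set.Icc t (t + T) := Set.uIcc_of_le htT
  have hsub : Set.Icc t (t + T) ⊆ Set.Ici 0 := fun τ hτ => le_trans ht hτ.1
  have hθc : ContinuousOn tθ (Set.Ici 0) :=
    fun s hs => ((hθ s hs).continuousAt).continuousWithinAt
  set u : ℝ → ℝ := fun τ => ⟪φ τ, tθ τ⟫ with hu_def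
  have hu : ContinuousOn u (Set.Ici 0) := hφ.inner hθc
  have huI : ContinuousOn u (Set.Icc t (t + T)) := hu.mono hsub
  set S : ℝ := ∫ τ in t..t + T, u τ ^ 2 with hS_def
  have hS0 : 0 ≤ S :=
    intervalIntegral.integral_nonneg htT (fun τ _ => sq_nonneg _)
  have hu2int : IntervalIntegrable (fun τ => u τ ^ 2) volume t (t + T) :=
    ContinuousOn.intervalIntegrable (by rw [huIcc]; exact huI.pow 2)
  -- FTC for g
  have hftc : ‖tθ (t + T)‖ ^ 2 - ‖tθ t‖ ^ 2 = -(2 * γ) * S := by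
    have h := intervalIntegral.integral_eq_sub_of_hasDerivAt
      (f := fun r => ‖tθ r‖ ^ 2) (f' := fun τ => -(2 * γ) * u τ ^ 2)
      (fun τ hτ => deriv_g φ tθ hθ (hsub (huIcc ▸ hτ)))
      (hu2int.const_mul _)
    rw [intervalIntegral.integral_const_mul] at h
    rw [← h]
  -- Cauchy-Schwarz bound on ∫|u|
  have habs_int : IntervalIntegrable (fun τ => |u τ|) volume t (t + T) :=
    (ContinuousOn.intervalIntegrable (by rw [huIcc]; exact huI)).abs
  set I : ℝ := ∫ τ in t..t + T, |u τ| with hI_def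
  have hI0 : 0 ≤ I := intervalIntegral.integral_nonneg htT (fun τ _ => abs_nonneg _)
  have hCS : I ^ 2 ≤ T * S := by
    have h := cs_aux htT huI
    simpa using h
  -- displacement bound
  have hΔ : ∀ τ ∈ Set.Icc t (t + T),
      ‖tθ τ - tθ t‖ ^ 2 ≤ γ ^ 2 * B ^ 2 * (T * S) := by
    intro τ hτ
    have huIcc' : Set.uIcc t τ = Set.Icc t τ := Set.uIcc_of_le hτ.1
    have hsub' : Set.Icc t τ ⊆ Set.Icc t (t + T) := Set.Icc_subset_Icc le_rfl hτ.2
    have hcφ : ContinuousOn (fun s => -(γ * u s) • φ s) (Set.Icc t τ) :=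
      ((continuousOn_const.mul (hu.mono (hsub'.trans hsub))).neg).smul (hφ.mono (hsub'.trans hsub))
    have h1 : (∫ s in t..τ, -(γ * u s) • φ s) = tθ τ - tθ t :=
      intervalIntegral.integral_eq_sub_of_hasDerivAt
        (fun s hs => hθ s (hsub (hsub' (huIcc' ▸ hs))))
        (ContinuousOn.intervalIntegrable (huIcc' ▸ hcφ))
    have h2 : ‖tθ τ - tθ t‖ ≤ ∫ s in t..τ, γ * B * |u s| := by
      rw [← h1]
      refine le_trans (intervalIntegral.norm_integral_le_integral_norm hτ.1) ?_
      apply intervalIntegral.integral_mono_on hτ.1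
      · exact ContinuousOn.intervalIntegrable (huIcc' ▸ hcφ.norm)
      · apply ContinuousOn.intervalIntegrable
        rw [huIcc']
        exact continuousOn_const.mul ((hu.mono (hsub'.trans hsub)).abs)
      · intro s hs
        have hs0 : (0:ℝ) ≤ s := le_trans ht hs.1
        rw [norm_smul, Real.norm_eq_abs, abs_neg, abs_mul, abs_of_pos hγ]
        have hb := hφB s hs0
        have h3 := mul_le_mul_of_nonneg_left hb (mul_nonneg hγ.le (abs_nonneg (u s)))
        refine le_trans (le_of_eq (by ring)) (le_trans h3 (le_of_eq (by ring)))
    have h4 : (∫ s in t..τ, γ * B * |u s|) ≤ γ * B * I := by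
      rw [hI_def, ← intervalIntegral.integral_const_mul]
      apply intervalIntegral.integral_mono_interval le_rfl hτ.1 hτ.2
      · filter_upwards with s
        positivity
      · exact habs_int.const_mul _
    have h5 : ‖tθ τ - tθ t‖ ≤ γ * B * I := le_trans h2 h4
    have hsq := mul_self_le_mul_self (norm_nonneg (tθ τ - tθ t)) h5
    have hsc := mul_le_mul_of_nonneg_left hCS (by positivity : (0:ℝ) ≤ γ ^ 2 * B ^ 2)
    nlinarith [hsq, hsc]
  -- pointwise bound on the frozen inner product
  have hpt : ∀ τ ∈ Set.Icc t (t + T),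
      ⟪φ τ, tθ t⟫ ^ 2 ≤ 2 * u τ ^ 2 + 2 * γ ^ 2 * B ^ 4 * T * S := by
    intro τ hτ
    have hτ0 : (0:ℝ) ≤ τ := le_trans ht hτ.1
    have hsplit : ⟪φ τ, tθ t⟫ = u τ - ⟪φ τ, tθ τ - tθ t⟫ := by
      rw [inner_sub_right]; simp [hu_def]
    have hb1 : |⟪φ τ, tθ τ - tθ t⟫| ≤ B * ‖tθ τ - tθ t‖ :=
      le_trans (abs_real_inner_le_norm _ _)
        (mul_le_mul_of_nonneg_right (hφB τ hτ0) (norm_nonneg _))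
    have hb2 : ⟪φ τ, tθ τ - tθ t⟫ ^ 2 ≤ B ^ 2 * ‖tθ τ - tθ t‖ ^ 2 := by
      have := abs_nonneg (⟪φ τ, tθ τ - tθ t⟫)
      nlinarith [sq_abs (⟪φ τ, tθ τ - tθ t⟫)]
    have hb3 := hΔ τ hτ
    rw [hsplit]
    nlinarith [sq_nonneg (u τ + ⟪φ τ, tθ τ - tθ t⟫), hb2, hb3]
  -- integrate pointwise bound and combine with PE
  have hlhs_int : IntervalIntegrable (fun τ => ⟪φ τ, tθ t⟫ ^ 2) volume t (t + T) := by
    apply ContinuousOn.intervalIntegrable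
    rw [huIcc]
    exact ((hφ.mono hsub).inner continuousOn_const).pow 2
  have hrhs_int : IntervalIntegrable
      (fun τ => 2 * u τ ^ 2 + 2 * γ ^ 2 * B ^ 4 * T * S) volume t (t + T) :=
    (hu2int.const_mul 2).add intervalIntegrable_const
  have h6 : (∫ τ in t..t + T, ⟪φ τ, tθ t⟫ ^ 2)
      ≤ 2 * S + 2 * γ ^ 2 * B ^ 4 * T * S * T := by
    refine le_trans
      (intervalIntegral.integral_mono_on htT hlhs_int hrhs_int hpt) ?_
    rw [intervalIntegral.integral_add (hu2int.const_mul 2) intervalIntegrable_const,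
      intervalIntegral.integral_const_mul, intervalIntegral.integral_const, smul_eq_mul]
    ring_nf
    linarith
  have h7 := hQ t ht (tθ t)
  have hc : (0:ℝ) < 2 + 2 * γ ^ 2 * B ^ 4 * T ^ 2 := by positivity
  have h8 : α₁ * ‖tθ t‖ ^ 2 ≤ (2 + 2 * γ ^ 2 * B ^ 4 * T ^ 2) * S := by
    nlinarith [le_trans h7 h6]
  have h9 : 2 * γ * (α₁ * ‖tθ t‖ ^ 2 / (2 + 2 * γ ^ 2 * B ^ 4 * T ^ 2)) ≤ 2 * γ * S := by
    apply mul_le_mul_of_nonneg_left _ (by positivity)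
    rw [div_le_iff₀ hc]
    linarith [h8]
  have h10 : (1 - 2 * γ * α₁ / (2 + 2 * γ ^ 2 * B ^ 4 * T ^ 2)) * ‖tθ t‖ ^ 2
      = ‖tθ t‖ ^ 2 - 2 * γ * (α₁ * ‖tθ t‖ ^ 2 / (2 + 2 * γ ^ 2 * B ^ 4 * T ^ 2)) := by
    field_simp
  rw [h10]
  linarith [hftc, h9]

theorem pe_implies_exponential_stability
    (n : ℕ) (hn : 1 ≤ n) (γ B : ℝ) (hγ : 0 < γ) (hB : 0 < B)
    (φ : ℝ → EuclideanSpace ℝ (Fin n)) (hφ : ContinuousOn φ (Set.Ici 0))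
    (hφB : ∀ t ≥ (0:ℝ), ‖φ t‖ ≤ B)
    (hPE : ∃ α₁ > (0:ℝ), ∃ T > (0:ℝ), ∀ t ≥ (0:ℝ),
      Matrix.PosSemidef
        ((Matrix.of fun i j => ∫ τ in t..t + T, φ τ i * φ τ j) -
          α₁ • (1 : Matrix (Fin n) (Fin n) ℝ))) :
    ∃ ρ > (0:ℝ), ∃ lam > (0:ℝ),
      ∀ tθ : ℝ → EuclideanSpace ℝ (Fin n),
        (∀ t ≥ (0:ℝ), HasDerivAt tθ (-(γ * ⟪φ t, tθ t⟫) • φ t) t) →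
        ∀ t₀ t : ℝ, 0 ≤ t₀ → t₀ ≤ t →
          ‖tθ t‖ ≤ ρ * Real.exp (-lam * (t - t₀)) * ‖tθ t₀‖ := by
  obtain ⟨α₁, hα₁, T, hT, hPE⟩ := hPE
  have hQ : ∀ t ≥ (0:ℝ), ∀ x : EuclideanSpace ℝ (Fin n),
      α₁ * ‖x‖ ^ 2 ≤ ∫ τ in t..t + T, ⟪φ τ, x⟫ ^ 2 :=
    fun t ht x => quad_form φ hφ hT ht (hPE t ht) x
  -- α₁ ≤ B² T
  have hαB : α₁ ≤ B ^ 2 * T := by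
    set x : EuclideanSpace ℝ (Fin n) :=
      EuclideanSpace.single (⟨0, hn⟩ : Fin n) (1:ℝ) with hx_def
    have hxn : ‖x‖ = 1 := by rw [hx_def, EuclideanSpace.norm_single]; simp
    have h1 := hQ 0 le_rfl x
    rw [hxn] at h1
    have h2 : (∫ τ in (0:ℝ)..0 + T, ⟪φ τ, x⟫ ^ 2) ≤ B ^ 2 * T := by
      have hsub : Set.uIcc (0:ℝ) (0 + T) ⊆ Set.Ici 0 := by
        rw [Set.uIcc_of_le (by linarith)]
        exact fun τ hτ => hτ.1
      have hle : (∫ τ in (0:ℝ)..0 + T, ⟪φ τ, x⟫ ^ 2)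
          ≤ ∫ τ in (0:ℝ)..0 + T, B ^ 2 := by
        apply intervalIntegral.integral_mono_on (by linarith)
        · exact ContinuousOn.intervalIntegrable
            (((hφ.mono hsub).inner continuousOn_const).pow 2)
        · exact intervalIntegrable_const
        · intro τ hτ
          have hb := hφB τ hτ.1
          have h3 : |⟪φ τ, x⟫| ≤ ‖φ τ‖ * ‖x‖ := abs_real_inner_le_norm _ _
          rw [hxn, mul_one] at h3
          nlinarith [sq_abs (⟪φ τ, x⟫), norm_nonneg (φ τ), abs_nonneg (⟪φ τ, x⟫)]
        
      rw [intervalIntegral.integral_const, smul_eq_mul] at hle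
      calc (∫ τ in (0:ℝ)..0 + T, ⟪φ τ, x⟫ ^ 2) ≤ (0 + T - 0) * B ^ 2 := hle
        _ = B ^ 2 * T := by ring
    linarith
  set c : ℝ := 2 + 2 * γ ^ 2 * B ^ 4 * T ^ 2 with hc_def
  have hc : (0:ℝ) < c := by positivity
  set k : ℝ := 1 - 2 * γ * α₁ / c with hk_def
  have hk_half : 1 / 2 ≤ k := by
    have hd : 2 * γ * α₁ / c ≤ 1 / 2 := by
      rw [div_le_iff₀ hc]
      nlinarith [sq_nonneg (γ * B ^ 2 * T - 1), mul_pos hγ (mul_pos (pow_pos hB 2) hT)]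
    rw [hk_def]
    linarith
  have hk0 : (0:ℝ) < k := lt_of_lt_of_le (by norm_num) hk_half
  have hk1 : k < 1 := by
    rw [hk_def]
    have : 0 < 2 * γ * α₁ / c := by positivity
    linarith
  set lam : ℝ := -Real.log k / (2 * T) with hlam_def
  have hlogk : Real.log k < 0 := Real.log_neg hk0 hk1
  have hlam : 0 < lam := div_pos (by linarith) (by linarith)
  refine ⟨Real.sqrt k⁻¹, Real.sqrt_pos.mpr (by positivity), lam, hlam, ?_⟩
  intro tθ hθ t₀ t h0 hle
  set g : ℝ → ℝ := fun s => ‖tθ s‖ ^ 2 with hg_def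
  have hg : ∀ s ≥ (0:ℝ), HasDerivAt g (-(2 * γ) * ⟪φ s, tθ s⟫ ^ 2) s :=
    fun s hs => deriv_g φ tθ hθ hs
  have hanti : AntitoneOn g (Set.Ici 0) := by
    apply antitoneOn_of_deriv_nonpos (convex_Ici 0)
    · exact fun s hs => ((hg s hs).continuousAt).continuousWithinAt
    · rw [interior_Ici]
      exact fun s hs => ((hg s (le_of_lt hs)).differentiableAt).differentiableWithinAt
    · intro s hs
      rw [interior_Ici] at hs
      rw [(hg s hs.le).deriv]
      nlinarith [sq_nonneg (⟪φ s, tθ s⟫)]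
  have hstep : ∀ s ≥ (0:ℝ), g (s + T) ≤ k * g s :=
    fun s hs => step_lemma hγ hB hT φ hφ hφB hQ tθ hθ hs
  have hiter : ∀ m : ℕ, g (t₀ + m * T) ≤ k ^ m * g t₀ := by
    intro m
    induction m with
    | zero => simp [hg_def]
    | succ m ih =>
      have h2 : (0:ℝ) ≤ t₀ + m * T := by positivity
      calc g (t₀ + ((m + 1 : ℕ) : ℝ) * T) = g ((t₀ + m * T) + T) := by
            congr 1; push_cast; ring
        _ ≤ k * g (t₀ + m * T) := hstep _ h2
        _ ≤ k * (k ^ m * g t₀) := mul_le_mul_of_nonneg_left ih hk0.le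
        _ = k ^ (m + 1) * g t₀ := by ring
  set x : ℝ := (t - t₀) / T with hx_def
  have hx0 : 0 ≤ x := div_nonneg (by linarith) (by linarith)
  set m : ℕ := ⌊x⌋₊ with hm_def
  have hm1 : (m : ℝ) ≤ x := Nat.floor_le hx0
  have hm2 : x < m + 1 := Nat.lt_floor_add_one x
  have ht1 : t₀ + m * T ≤ t := by
    have h3 : (m:ℝ) * T ≤ x * T := mul_le_mul_of_nonneg_right hm1 (le_of_lt hT)
    have h4 : x * T = t - t₀ := by rw [hx_def]; field_simp
    linarith
  have h0' : (0:ℝ) ≤ t₀ + m * T := by positivity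
  have hgt : g t ≤ k ^ m * g t₀ :=
    le_trans (hanti h0' (le_trans h0 hle) ht1) (hiter m)
  have hkm : k ^ m ≤ k⁻¹ * Real.exp (x * Real.log k) := by
    have h1 : k ^ ((m:ℝ) + 1) ≤ k ^ x :=
      Real.rpow_le_rpow_of_exponent_ge hk0 hk1.le hm2.le
    have h2 : k ^ (x:ℝ) = Real.exp (x * Real.log k) := by
      rw [Real.rpow_def_of_pos hk0]; ring_nf
    have hcast : ((m:ℝ) + 1) = ((m + 1 : ℕ) : ℝ) := by push_cast; ring
    rw [hcast, Real.rpow_natCast, pow_succ, h2] at h1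
    rw [inv_mul_eq_div, le_div_iff₀ hk0]
    exact h1
  have hexp2 : Real.exp (x * Real.log k) = Real.exp (-lam * (t - t₀)) ^ 2 := by
    rw [sq, ← Real.exp_add]
    congr 1
    rw [hlam_def, hx_def]
    field_simp
    ring
  have hρ2 : (Real.sqrt k⁻¹) ^ 2 = k⁻¹ := Real.sq_sqrt (by positivity)
  have gfinal : g t ≤ (Real.sqrt k⁻¹ * Real.exp (-lam * (t - t₀)) * ‖tθ t₀‖) ^ 2 := by
    calc g t ≤ k ^ m * g t₀ := hgt
      _ ≤ (k⁻¹ * Real.exp (x * Real.log k)) * g t₀ :=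
          mul_le_mul_of_nonneg_right hkm (by rw [hg_def]; positivity)
      _ = (Real.sqrt k⁻¹ * Real.exp (-lam * (t - t₀)) * ‖tθ t₀‖) ^ 2 := by
          simp only [hg_def]
          rw [hexp2, mul_pow, mul_pow, hρ2]
  have hfin := Real.sqrt_le_sqrt gfinal
  simp only [hg_def] at hfin
  rw [Real.sqrt_sq (norm_nonneg _), Real.sqrt_sq (by positivity)] at hfin
  exact hfin
end

section
/- Let a > 0, let H be an m×m real symmetric positive semidefinite matrix, let y : [0,∞) → ℝᵐ be differentiable with ‖ẏ(t)‖ ≤ M₂ for all t, and let x : [0,∞) → ℝᵐ be differentiable with ‖ẋ(t)‖ ≤ ε for all t. Define G(t) = e^{−a t} ∫₀ᵗ ( ∫₀^{τ} e^{a s} ẏ(s) ds )ᵀ H ẋ(τ) dτ. Then for all t ≥ 0, |G(t)| ≤ M₂ λ_max(H) ε / a², where λ_max(H) denotes the largest eigenvalue (operator norm) of H. -/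
open scoped RealInnerProductSpace

theorem drift_term_G_bound
    (m : ℕ) (a M₂ ε : ℝ) (ha : 0 < a)
    (H : Matrix (Fin m) (Fin m) ℝ) (hH : H.PosSemidef)
    (y y' : ℝ → EuclideanSpace ℝ (Fin m))
    (hy : ∀ t ≥ (0:ℝ), HasDerivAt y (y' t) t)
    (hyM : ∀ t ≥ (0:ℝ), ‖y' t‖ ≤ M₂)
    (x x' : ℝ → EuclideanSpace ℝ (Fin m))
    (hx : ∀ t ≥ (0:ℝ), HasDerivAt x (x' t) t)
    (hxε : ∀ t ≥ (0:ℝ), ‖x' t‖ ≤ ε)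
    (G : ℝ → ℝ)
    (hG : ∀ t, G t = Real.exp (-a * t) * ∫ τ in (0:ℝ)..t,
      ⟪(∫ s in (0:ℝ)..τ, Real.exp (a * s) • y' s), Matrix.toEuclideanLin H (x' τ)⟫) :
    ∀ t ≥ (0:ℝ), |G t| ≤ M₂ * ‖Matrix.toEuclideanCLM (𝕜 := ℝ) H‖ * ε / a ^ 2 := by
  intro t ht
  set K := Matrix.toEuclideanCLM (𝕜 := ℝ) H with hK
  have hM₂ : 0 ≤ M₂ := le_trans (norm_nonneg _) (hyM 0 le_rfl)
  have hε : 0 ≤ ε := le_trans (norm_nonneg _) (hxε 0 le_rfl)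
  have hKn : 0 ≤ ‖K‖ := norm_nonneg _
  -- exact value of ∫ exp (a s)
  have hexp : ∀ b : ℝ, (∫ s in (0:ℝ)..b, Real.exp (a * s)) =
      (Real.exp (a * b) - 1) / a := by
    intro b
    have hd : ∀ s ∈ Set.uIcc (0:ℝ) b,
        HasDerivAt (fun u => Real.exp (a * u) / a) (Real.exp (a * s)) s := by
      intro s _
      have h1 : HasDerivAt (fun u : ℝ => a * u) a s := by
        simpa using (hasDerivAt_id s).const_mul a
      have h2 := (h1.exp).div_const a
      simpa [mul_div_assoc, mul_div_cancel_left₀, ne_of_gt ha] using h2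
    have hint : IntervalIntegrable (fun s => Real.exp (a * s)) MeasureTheory.volume 0 b :=
      (Real.continuous_exp.comp (continuous_const.mul continuous_id)).intervalIntegrable 0 b
    rw [intervalIntegral.integral_eq_sub_of_hasDerivAt hd hint]
    simp [sub_div]
  -- bound on the inner primitive
  have hF : ∀ τ ∈ Set.Ioc (0:ℝ) t,
      ‖(∫ s in (0:ℝ)..τ, Real.exp (a * s) • y' s)‖ ≤ M₂ * Real.exp (a * τ) / a := by
    intro τ hτ
    have hb : ∀ᵐ s ∂(MeasureTheory.volume.restrict (Set.uIoc (0:ℝ) τ)),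
        ‖Real.exp (a * s) • y' s‖ ≤ M₂ * Real.exp (a * s) := by
      refine MeasureTheory.ae_restrict_of_forall_mem measurableSet_uIoc ?_
      intro s hs
      rw [Set.uIoc_of_le hτ.1.le] at hs
      have hs0 : (0:ℝ) ≤ s := hs.1.le
      rw [norm_smul, Real.norm_eq_abs, abs_of_pos (Real.exp_pos _), mul_comm]
      exact mul_le_mul_of_nonneg_right (hyM s hs0) (Real.exp_pos _).le
    have hbi : IntervalIntegrable (fun s => M₂ * Real.exp (a * s))
        MeasureTheory.volume 0 τ :=
      (continuous_const.mul (Real.continuous_exp.comp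
        (continuous_const.mul continuous_id))).intervalIntegrable 0 τ
    have := intervalIntegral.norm_integral_le_abs_of_norm_le hb hbi
    have hval : (∫ s in (0:ℝ)..τ, M₂ * Real.exp (a * s)) =
        M₂ * ((Real.exp (a * τ) - 1) / a) := by
      rw [intervalIntegral.integral_const_mul, hexp]
    rw [hval] at this
    refine this.trans ?_
    have h1 : M₂ * ((Real.exp (a * τ) - 1) / a) ≤ M₂ * Real.exp (a * τ) / a := by
      rw [mul_div_assoc]
      refine mul_le_mul_of_nonneg_left ?_ hM₂
      gcongr
      linarith
    have h0 : 0 ≤ M₂ * ((Real.exp (a * τ) - 1) / a) := by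
      have h1e : (1:ℝ) ≤ Real.exp (a * τ) := by
        rw [← Real.exp_zero]
        exact Real.exp_le_exp.mpr (mul_nonneg ha.le hτ.1.le)
      exact mul_nonneg hM₂ (div_nonneg (by linarith) ha.le)
    rw [abs_of_nonneg h0]
    exact h1
  -- bound on the inner product integrand
  have hg : ∀ᵐ τ ∂(MeasureTheory.volume.restrict (Set.uIoc (0:ℝ) t)),
      ‖⟪(∫ s in (0:ℝ)..τ, Real.exp (a * s) • y' s), Matrix.toEuclideanLin H (x' τ)⟫‖ ≤
        (M₂ * ‖K‖ * ε / a) * Real.exp (a * τ) := by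
    refine MeasureTheory.ae_restrict_of_forall_mem measurableSet_uIoc ?_
    intro τ hτ
    rw [Set.uIoc_of_le ht] at hτ
    have h1 : ‖⟪(∫ s in (0:ℝ)..τ, Real.exp (a * s) • y' s),
        Matrix.toEuclideanLin H (x' τ)⟫‖ ≤
        ‖(∫ s in (0:ℝ)..τ, Real.exp (a * s) • y' s)‖ * ‖Matrix.toEuclideanLin H (x' τ)‖ :=
      norm_inner_le_norm _ _
    have h2 : ‖Matrix.toEuclideanLin H (x' τ)‖ ≤ ‖K‖ * ε := by
      have heq : Matrix.toEuclideanLin H (x' τ) = K (x' τ) := by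
        rw [hK, ← Matrix.coe_toEuclideanCLM_eq_toEuclideanLin]
        rfl
      rw [heq]
      calc ‖K (x' τ)‖ ≤ ‖K‖ * ‖x' τ‖ := K.le_opNorm _
        _ ≤ ‖K‖ * ε := mul_le_mul_of_nonneg_left (hxε τ hτ.1.le) hKn
    refine h1.trans ?_
    calc ‖(∫ s in (0:ℝ)..τ, Real.exp (a * s) • y' s)‖ * ‖Matrix.toEuclideanLin H (x' τ)‖
        ≤ (M₂ * Real.exp (a * τ) / a) * (‖K‖ * ε) := by
          refine mul_le_mul (hF τ hτ) h2 (norm_nonneg _) ?_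
          exact div_nonneg (mul_nonneg hM₂ (Real.exp_pos _).le) ha.le
      _ = (M₂ * ‖K‖ * ε / a) * Real.exp (a * τ) := by ring
  have hbi : IntervalIntegrable (fun τ => (M₂ * ‖K‖ * ε / a) * Real.exp (a * τ))
      MeasureTheory.volume 0 t :=
    (continuous_const.mul (Real.continuous_exp.comp
      (continuous_const.mul continuous_id))).intervalIntegrable 0 t
  have hmain := intervalIntegral.norm_integral_le_abs_of_norm_le hg hbi
  have hval : (∫ τ in (0:ℝ)..t, (M₂ * ‖K‖ * ε / a) * Real.exp (a * τ)) =
      (M₂ * ‖K‖ * ε / a) * ((Real.exp (a * t) - 1) / a) := by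
    rw [intervalIntegral.integral_const_mul, hexp]
  rw [hval] at hmain
  have hge1 : (1:ℝ) ≤ Real.exp (a * t) := by
    rw [← Real.exp_zero]
    exact Real.exp_le_exp.mpr (mul_nonneg ha.le ht)
  have hC : 0 ≤ M₂ * ‖K‖ * ε := mul_nonneg (mul_nonneg hM₂ hKn) hε
  have h0 : 0 ≤ (M₂ * ‖K‖ * ε / a) * ((Real.exp (a * t) - 1) / a) :=
    mul_nonneg (div_nonneg hC ha.le) (div_nonneg (by linarith) ha.le)
  rw [abs_of_nonneg h0] at hmain
  rw [hG t, abs_mul, abs_of_pos (Real.exp_pos _)]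
  calc Real.exp (-a * t) * |∫ τ in (0:ℝ)..t,
        ⟪(∫ s in (0:ℝ)..τ, Real.exp (a * s) • y' s), Matrix.toEuclideanLin H (x' τ)⟫|
      ≤ Real.exp (-a * t) * ((M₂ * ‖K‖ * ε / a) * ((Real.exp (a * t) - 1) / a)) := by
        refine mul_le_mul_of_nonneg_left ?_ (Real.exp_pos _).le
        exact hmain
    _ ≤ M₂ * ‖K‖ * ε / a ^ 2 := by
        have hle : Real.exp (-a * t) * (Real.exp (a * t) - 1) ≤ 1 := by
          have : Real.exp (-a * t) * Real.exp (a * t) = 1 := by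
            rw [← Real.exp_add]; simp
          nlinarith [Real.exp_pos (-a * t)]
        have heq : Real.exp (-a * t) * ((M₂ * ‖K‖ * ε / a) * ((Real.exp (a * t) - 1) / a))
            = (M₂ * ‖K‖ * ε / a ^ 2) * (Real.exp (-a * t) * (Real.exp (a * t) - 1)) := by
          ring
        rw [heq]
        have hC2 : 0 ≤ M₂ * ‖K‖ * ε / a ^ 2 := div_nonneg hC (by positivity)
        calc (M₂ * ‖K‖ * ε / a ^ 2) * (Real.exp (-a * t) * (Real.exp (a * t) - 1))
            ≤ (M₂ * ‖K‖ * ε / a ^ 2) * 1 := mul_le_mul_of_nonneg_left hle hC2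
          _ = M₂ * ‖K‖ * ε / a ^ 2 := mul_one _
end

section
/- Let a > 0, let H be an m×m real symmetric positive definite matrix, let c₁ ∈ ℝ, let y : [0,∞) → ℝᵐ be twice differentiable with ‖y(t)‖ ≤ M₁, ‖ẏ(t)‖ ≤ M₂ and ‖ÿ(t)‖ ≤ M₃ for all t, and let x : [0,∞) → ℝᵐ be differentiable with ‖x(t)‖ ≤ M₄ and ‖ẋ(t)‖ ≤ ε for all t. Define F(t) = c₁ − (1/2)(y(t) − x(t))ᵀH(y(t) − x(t)), the regressor Ψ(t) ∈ ℝ^{m(m+3)/2} with entries (−(1/2)y₁(t)², −y₁(t)y₂(t), …, −y₁(t)y_m(t), −(1/2)y₂(t)², …, −(1/2)y_m(t)², y₁(t), …, y_m(t)), and the time-varying parameter vector θ*(t) ∈ ℝ^{m(m+3)/2} with entries (H₁₁, H₁₂, …, H₁m, H₂₂, …, H_{mm}, (H x(t))₁, …, (H x(t))_m). Define the filtered signals z(t) = F(t) − a∫₀ᵗ e^{−a(t−τ)} F(τ) dτ and φ(t) = Ψ(t) − a∫₀ᵗ e^{−a(t−τ)} Ψ(τ) dτ. Then there exist a constant K₁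 > 0 depending only on M₁, M₂, M₄, λ_max(H) and a, and constants M ≥ 0, λ > 0, such that for all t ≥ 0, |z(t) − θ*(t)ᵀ φ(t)| ≤ K₁ ε + M e^{−λ t}. -/
open scoped RealInnerProductSpace

/-- Index set for the parameter/regressor vectors in `ℝ^{m(m+3)/2}`:
the `m(m+1)/2` upper-triangular positions of the Hessian followed by `m`
positions for the linear part. -/
abbrev SymIdx (m : ℕ) := {p : Fin m × Fin m // p.1 ≤ p.2} ⊕ Fin m

lemma euclid_norm_le_of_abs_le {ι : Type*} [Fintype ι] (w : EuclideanSpace ℝ ι) (B : ℝ)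
    (hB : 0 ≤ B) (h : ∀ k, |w k| ≤ B) : ‖w‖ ≤ Real.sqrt (Fintype.card ι) * B := by
  rw [EuclideanSpace.norm_eq]
  have : ∑ i, ‖w i‖ ^ 2 ≤ (Fintype.card ι : ℝ) * B ^ 2 := by
    calc ∑ i, ‖w i‖ ^ 2 ≤ ∑ _i : ι, B ^ 2 := by
          apply Finset.sum_le_sum
          intro i _
          have := h i
          rw [Real.norm_eq_abs]
          nlinarith [abs_nonneg (w i)]
      _ = (Fintype.card ι : ℝ) * B ^ 2 := by simp [Finset.sum_const, mul_comm]
  calc Real.sqrt (∑ i, ‖w i‖ ^ 2) ≤ Real.sqrt ((Fintype.card ι : ℝ) * B ^ 2) := Real.sqrt_le_sqrt this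
    _ = Real.sqrt (Fintype.card ι) * B := by
        rw [Real.sqrt_mul (by positivity), Real.sqrt_sq hB]

lemma euclid_coord_le_norm {ι : Type*} [Fintype ι] (v : EuclideanSpace ℝ ι) (i : ι) :
    |v i| ≤ ‖v‖ := by
  rw [EuclideanSpace.norm_eq, ← Real.sqrt_sq_eq_abs]
  apply Real.sqrt_le_sqrt
  have h1 : (v i) ^ 2 = ‖v i‖ ^ 2 := by rw [Real.norm_eq_abs, sq_abs]
  rw [h1]
  exact Finset.single_le_sum (f := fun j => ‖v j‖ ^ 2) (fun j _ => by positivity)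
    (Finset.mem_univ i)

lemma sym_sum_identity {m : ℕ} (H : Matrix (Fin m) (Fin m) ℝ)
    (hsym : ∀ i j, H i j = H j i) (v : Fin m → ℝ) :
    ∑ p : {p : Fin m × Fin m // p.1 ≤ p.2}, H p.1.1 p.1.2 *
      (if p.1.1 = p.1.2 then -(1/2) * (v p.1.1) ^ 2 else -(v p.1.1 * v p.1.2)) =
    -(1/2) * ∑ i, ∑ j, H i j * v i * v j := by
  classical
  set g : Fin m × Fin m → ℝ := fun p => H p.1 p.2 * v p.1 * v p.2 with hg
  set s : Fin m × Fin m → ℝ := fun p => H p.1 p.2 *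
      (if p.1 = p.2 then -(1/2) * (v p.1) ^ 2 else -(v p.1 * v p.2)) with hs
  set Alt := Finset.univ.filter (fun p : Fin m × Fin m => p.1 < p.2) with hAlt
  set Aeq := Finset.univ.filter (fun p : Fin m × Fin m => p.1 = p.2) with hAeq
  set Agt := Finset.univ.filter (fun p : Fin m × Fin m => p.2 < p.1) with hAgt
  have key : ∀ (f : Fin m × Fin m → ℝ),
      ∑ p ∈ Finset.univ.filter (fun p : Fin m × Fin m => p.1 ≤ p.2), f p
        = ∑ p ∈ Alt, f p + ∑ p ∈ Aeq, f p := by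
    intro f
    rw [← Finset.sum_filter_add_sum_filter_not
      (Finset.univ.filter (fun p : Fin m × Fin m => p.1 ≤ p.2)) (fun p => p.1 < p.2) f]
    congr 1
    · congr 1
      rw [Finset.filter_filter, hAlt]
      ext p; simp only [Finset.mem_filter, Finset.mem_univ, true_and]
      exact ⟨fun h => h.2, fun h => ⟨le_of_lt h, h⟩⟩
    · congr 1
      rw [Finset.filter_filter, hAeq]
      ext p; simp only [Finset.mem_filter, Finset.mem_univ, true_and, not_lt]
      exact ⟨fun h => le_antisymm h.1 h.2, fun h => ⟨le_of_eq h, le_of_eq h.symm⟩⟩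
  have keytot : ∑ p : Fin m × Fin m, g p
      = (∑ p ∈ Alt, g p + ∑ p ∈ Aeq, g p) + ∑ p ∈ Agt, g p := by
    rw [← Finset.sum_filter_add_sum_filter_not
      (Finset.univ : Finset (Fin m × Fin m)) (fun p => p.1 ≤ p.2) g, key g]
    congr 1
    rw [hAgt]; congr 1
    ext p; simp only [Finset.mem_filter, Finset.mem_univ, true_and, not_le]
  have hswap : ∑ p ∈ Agt, g p = ∑ p ∈ Alt, g p := by
    apply Finset.sum_nbij' (fun p => Prod.swap p) (fun p => Prod.swap p)
    · intro p hp; simp only [hAgt, hAlt, Finset.mem_filter, Finset.mem_univ, true_and] at hp ⊢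
      exact hp
    · intro p hp; simp only [hAgt, hAlt, Finset.mem_filter, Finset.mem_univ, true_and] at hp ⊢
      exact hp
    · intro p _; simp
    · intro p _; simp
    · intro p _; simp only [hg]; show H p.1 p.2 * v p.1 * v p.2 = H p.2 p.1 * v p.2 * v p.1
      rw [hsym p.1 p.2]; ring
  have e1 : ∀ p ∈ Alt, s p = -g p := by
    intro p hp
    simp only [hAlt, Finset.mem_filter, Finset.mem_univ, true_and] at hp
    simp only [hs, hg, if_neg (ne_of_lt hp)]
    ring
  have e2 : ∀ p ∈ Aeq, s p = -(1/2) * g p := by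
    intro p hp
    simp only [hAeq, Finset.mem_filter, Finset.mem_univ, true_and] at hp
    have hv : v p.1 = v p.2 := by rw [hp]
    simp only [hs, hg, if_pos hp, pow_two, hv]
    ring
  have h1 : ∑ p : {p : Fin m × Fin m // p.1 ≤ p.2}, s p.1
      = ∑ p ∈ Finset.univ.filter (fun p : Fin m × Fin m => p.1 ≤ p.2), s p :=
    (Finset.sum_subtype _ (by simp) s).symm
  have hLHS : ∑ p : {p : Fin m × Fin m // p.1 ≤ p.2}, s p.1
      = -(∑ p ∈ Alt, g p) + -(1/2) * ∑ p ∈ Aeq, g p := by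
    rw [h1, key s, Finset.sum_congr rfl e1, Finset.sum_congr rfl e2,
      Finset.sum_neg_distrib, ← Finset.mul_sum]
  have hRHS : ∑ i, ∑ j, H i j * v i * v j = ∑ p : Fin m × Fin m, g p := by
    rw [← Finset.sum_product']
    simp [hg]
  show ∑ p : {p : Fin m × Fin m // p.1 ≤ p.2}, s p.1 = _
  rw [hLHS, hRHS, keytot, hswap]
  ring

lemma exp_filter_integral (a t : ℝ) (ha : 0 < a) :
    ∫ τ in (0:ℝ)..t, Real.exp (-a * (t - τ)) = (1 - Real.exp (-a * t)) / a := by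
  have h := intervalIntegral.integral_comp_sub_left (fun s => Real.exp (-a * s)) t
    (a := 0) (b := t)
  simp only [sub_zero, sub_self] at h
  rw [h]
  have hder : ∀ s ∈ Set.uIcc (0:ℝ) t, HasDerivAt (fun u => -(Real.exp (-a * u) / a))
      (Real.exp (-a * s)) s := by
    intro s _
    have h1 : HasDerivAt (fun u : ℝ => -a * u) (-a) s := by
      simpa using (hasDerivAt_id s).const_mul (-a)
    have h3 := ((h1.exp).div_const a).neg
    refine h3.congr_deriv ?_
    field_simp
  rw [intervalIntegral.integral_eq_sub_of_hasDerivAt hder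
    (Continuous.intervalIntegrable (by continuity) _ _)]
  simp
  field_simp
  ring

lemma exp_ramp_integral_le (a t : ℝ) (ha : 0 < a) (ht : 0 ≤ t) :
    ∫ τ in (0:ℝ)..t, (t - τ) * Real.exp (-a * (t - τ)) ≤ 1 / a ^ 2 := by
  have h := intervalIntegral.integral_comp_sub_left (fun s => s * Real.exp (-a * s)) t
    (a := 0) (b := t)
  simp only [sub_zero, sub_self] at h
  rw [h]
  have hder : ∀ s ∈ Set.uIcc (0:ℝ) t, HasDerivAt
      (fun u => -((u / a + 1 / a ^ 2) * Real.exp (-a * u)))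
      (s * Real.exp (-a * s)) s := by
    intro s _
    have h1 : HasDerivAt (fun u : ℝ => -a * u) (-a) s := by
      simpa using (hasDerivAt_id s).const_mul (-a)
    have h2 : HasDerivAt (fun u : ℝ => u / a + 1 / a ^ 2) (1 / a) s := by
      exact ((hasDerivAt_id s).div_const a).add_const (1 / a ^ 2)
    have h3 := (h2.mul h1.exp).neg
    refine h3.congr_deriv ?_
    field_simp
    ring
  rw [intervalIntegral.integral_eq_sub_of_hasDerivAt hder
    (Continuous.intervalIntegrable (by continuity) _ _)]
  have hpos : 0 ≤ (t / a + 1 / a ^ 2) * Real.exp (-a * t) := by positivity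
  have : -((0 / a + 1 / a ^ 2) * Real.exp (-a * 0)) = -(1 / a ^ 2) := by simp
  rw [this]
  linarith

set_option maxHeartbeats 1600000 in
theorem drift_parametric_model_error_bound
    (m : ℕ) (a M₁ M₂ M₄ : ℝ) (ha : 0 < a)
    (H : Matrix (Fin m) (Fin m) ℝ) (hH : H.PosDef) :
    ∃ K₁ > (0:ℝ),
      ∀ (c1 M₃ ε : ℝ) (y y' y'' x x' : ℝ → EuclideanSpace ℝ (Fin m)),
        (∀ t ≥ (0:ℝ), HasDerivAt y (y' t) t) →
        (∀ t ≥ (0:ℝ), HasDerivAt y' (y'' t) t) →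
        (∀ t ≥ (0:ℝ), ‖y t‖ ≤ M₁) →
        (∀ t ≥ (0:ℝ), ‖y' t‖ ≤ M₂) →
        (∀ t ≥ (0:ℝ), ‖y'' t‖ ≤ M₃) →
        (∀ t ≥ (0:ℝ), HasDerivAt x (x' t) t) →
        (∀ t ≥ (0:ℝ), ‖x t‖ ≤ M₄) →
        (∀ t ≥ (0:ℝ), ‖x' t‖ ≤ ε) →
        ∀ (F z : ℝ → ℝ) (Ψ θs φ : ℝ → EuclideanSpace ℝ (SymIdx m)),
          (∀ t, F t = c1 - (1/2) * ⟪y t - x t, Matrix.toEuclideanLin H (y t - x t)⟫) →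
          (∀ t (p : {p : Fin m × Fin m // p.1 ≤ p.2}),
            Ψ t (Sum.inl p) =
              if p.1.1 = p.1.2 then -(1/2) * (y t p.1.1) ^ 2
              else -(y t p.1.1 * y t p.1.2)) →
          (∀ t (i : Fin m), Ψ t (Sum.inr i) = y t i) →
          (∀ t (p : {p : Fin m × Fin m // p.1 ≤ p.2}), θs t (Sum.inl p) = H p.1.1 p.1.2) →
          (∀ t (i : Fin m), θs t (Sum.inr i) = Matrix.toEuclideanLin H (x t) i) →
          (∀ t, z t = F t - a * ∫ τ in (0:ℝ)..t, Real.exp (-a * (t - τ)) * F τ) →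
          (∀ t (k : SymIdx m),
            φ t k = Ψ t k - a * ∫ τ in (0:ℝ)..t, Real.exp (-a * (t - τ)) * Ψ τ k) →
          ∃ M ≥ (0:ℝ), ∃ lam > (0:ℝ), ∀ t ≥ (0:ℝ),
            |z t - ⟪θs t, φ t⟫| ≤ K₁ * ε + M * Real.exp (-lam * t) := by
  classical
  set T : EuclideanSpace ℝ (Fin m) →L[ℝ] EuclideanSpace ℝ (Fin m) :=
    LinearMap.toContinuousLinearMap (Matrix.toEuclideanLin H) with hT
  set M₁' : ℝ := max M₁ 1 with hM₁'
  set M₄' : ℝ := max M₄ 0 with hM₄'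
  set CΨ : ℝ := Real.sqrt (Fintype.card (SymIdx m)) * M₁' ^ 2 with hCΨ
  have hM₁'pos : (1:ℝ) ≤ M₁' := le_max_right _ _
  have hM₄'nonneg : (0:ℝ) ≤ M₄' := le_max_right _ _
  have hCΨnonneg : 0 ≤ CΨ := by positivity
  set C : ℝ := ‖T‖ * M₄' + ‖T‖ * CΨ with hC
  have hCnonneg : 0 ≤ C := by positivity
  refine ⟨C / a + 1, by positivity, ?_⟩
  intro c1 M₃ ε y y' y'' x x' hy hy' hyb hy'b hy''b hx hxb hx'b F z Ψ θs φ hF hΨ1 hΨ2 hθ1 hθ2 hz hφ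
  -- T is symmetric
  have hsymm : ∀ u w : EuclideanSpace ℝ (Fin m), ⟪T u, w⟫ = ⟪u, T w⟫ := by
    have := (Matrix.isHermitian_iff_isSymmetric.mp hH.1)
    exact fun u w => this u w
  have hsym : ∀ i j, H i j = H j i := by
    intro i j
    have := hH.1
    have h2 := congrArg (fun A => A j i) this.symm
    have h3 : H j i = H i j := by simpa [Matrix.conjTranspose_apply] using h2
    exact h3.symm
  -- basic positivity / nonnegativity
  have hε : 0 ≤ ε := le_trans (norm_nonneg _) (hx'b 0 le_rfl)
  -- continuity
  have hycont : ContinuousOn y (Set.Ici 0) :=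
    fun s hs => ((hy s hs).continuousAt).continuousWithinAt
  have hxcont : ContinuousOn x (Set.Ici 0) :=
    fun s hs => ((hx s hs).continuousAt).continuousWithinAt
  have hycoord : ∀ i : Fin m, ContinuousOn (fun s => y s i) (Set.Ici 0) :=
    fun i => (EuclideanSpace.proj i).continuous.comp_continuousOn hycont
  -- drift offset d
  set d : ℝ → ℝ := fun s => c1 - (1/2) * ⟪x s, T (x s)⟫ with hd
  -- key algebraic identity
  have hTapply : ∀ v : EuclideanSpace ℝ (Fin m), Matrix.toEuclideanLin H v = T v := fun _ => rfl
  have hinnerT : ∀ u w : EuclideanSpace ℝ (Fin m),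
      ⟪u, T w⟫ = ∑ i, ∑ j, u i * (H i j * w j) := by
    intro u w
    rw [PiLp.inner_apply]
    apply Finset.sum_congr rfl
    intro i _
    have : (T w) i = ∑ j, H i j * w j := by
      show (Matrix.toEuclideanLin H w) i = _
      rw [Matrix.toEuclideanLin_apply]
      simp [Matrix.mulVec, dotProduct]
    rw [this, RCLike.inner_apply]
    simp [Finset.mul_sum]
    rw [Finset.sum_mul]; exact Finset.sum_congr rfl (fun j _ => by ring)
  have hkey : ∀ s : ℝ, ⟪θs s, Ψ s⟫ = F s - d s := by
    intro s
    have expand : ⟪θs s, Ψ s⟫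
        = (∑ p : {p : Fin m × Fin m // p.1 ≤ p.2}, H p.1.1 p.1.2 *
            (if p.1.1 = p.1.2 then -(1/2) * (y s p.1.1) ^ 2 else -(y s p.1.1 * y s p.1.2)))
          + ∑ i, (T (x s)) i * y s i := by
      rw [PiLp.inner_apply, Fintype.sum_sum_type]
      congr 1
      · apply Finset.sum_congr rfl
        intro p _
        rw [RCLike.inner_apply, hθ1 s p, hΨ1 s p]
        simp
        split_ifs <;> ring
      · apply Finset.sum_congr rfl
        intro i _
        rw [RCLike.inner_apply, hθ2 s i, hΨ2 s i]
        simp [hTapply]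
        ring
    rw [expand, sym_sum_identity H hsym (fun i => y s i)]
    have hlin : ∑ i, (T (x s)) i * y s i = ⟪x s, T (y s)⟫ := by
      rw [← hsymm (x s) (y s), PiLp.inner_apply]
      apply Finset.sum_congr rfl
      intro i _
      rw [RCLike.inner_apply]
      simp
      ring
    rw [hlin]
    have h1 : ⟪y s, T (y s)⟫ = ∑ i, ∑ j, H i j * y s i * y s j := by
      rw [hinnerT]
      apply Finset.sum_congr rfl; intro i _
      apply Finset.sum_congr rfl; intro j _
      ring
    rw [hF s, hd]
    rw [hTapply]
    have hexp : ⟪y s - x s, T (y s - x s)⟫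
        = ⟪y s, T (y s)⟫ - 2 * ⟪x s, T (y s)⟫ + ⟪x s, T (x s)⟫ := by
      rw [map_sub, inner_sub_left, inner_sub_right, inner_sub_right]
      have : ⟪y s, T (x s)⟫ = ⟪x s, T (y s)⟫ := by
        rw [← hsymm (x s) (y s)]
        exact real_inner_comm _ _
      rw [this]
      ring
    rw [hexp, ← h1]
    ring
  -- Lipschitz bound for x
  have hxlip : ∀ τ t : ℝ, 0 ≤ τ → 0 ≤ t → ‖x t - x τ‖ ≤ ε * |t - τ| := by
    intro τ t hτ ht
    have := Convex.norm_image_sub_le_of_norm_hasDerivWithin_le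
      (f := x) (f' := x') (s := Set.Ici (0:ℝ)) (C := ε)
      (fun s hs => (hx s hs).hasDerivWithinAt)
      (fun s hs => hx'b s hs) (convex_Ici 0) hτ ht
    simpa [Real.norm_eq_abs] using this
  -- bound on ‖Ψ s‖
  have hΨbound : ∀ s : ℝ, 0 ≤ s → ‖Ψ s‖ ≤ CΨ := by
    intro s hs
    apply euclid_norm_le_of_abs_le _ _ (by positivity)
    intro k
    have hyc : ∀ i : Fin m, |y s i| ≤ M₁' :=
      fun i => le_trans (euclid_coord_le_norm (y s) i) (le_trans (hyb s hs) (le_max_left _ _))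
    match k with
    | Sum.inl p =>
      rw [hΨ1 s p]
      split_ifs with hp
      · rw [abs_mul, abs_neg, abs_pow]
        have h1 := hyc p.1.1
        have h2 := abs_nonneg (y s p.1.1)
        have h5 : |(1/2:ℝ)| = 1/2 := by norm_num
        rw [h5]
        nlinarith
      · rw [abs_neg, abs_mul]
        have h1 := hyc p.1.1
        have h2 := hyc p.1.2
        have h3 := abs_nonneg (y s p.1.1)
        have h4 := abs_nonneg (y s p.1.2)
        nlinarith
    | Sum.inr i =>
      rw [hΨ2 s i]
      have := hyc i
      nlinarith
  -- the θ difference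
  have hθdiff : ∀ σ τ : ℝ, ‖θs σ - θs τ‖ = ‖T (x σ) - T (x τ)‖ := by
    intro σ τ
    rw [EuclideanSpace.norm_eq, EuclideanSpace.norm_eq]
    congr 1
    rw [Fintype.sum_sum_type]
    have hzero : ∑ p : {p : Fin m × Fin m // p.1 ≤ p.2},
        ‖(θs σ - θs τ) (Sum.inl p)‖ ^ 2 = 0 := by
      apply Finset.sum_eq_zero
      intro p _
      have : (θs σ - θs τ) (Sum.inl p) = 0 := by
        simp only [PiLp.sub_apply, hθ1 σ p, hθ1 τ p, sub_self]
      rw [this]; simp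
    rw [hzero, zero_add]
    apply Finset.sum_congr rfl
    intro i _
    congr 1
    simp only [PiLp.sub_apply, hθ2 σ i, hθ2 τ i]
    rfl
  -- continuity of component functions
  have hΨkcont : ∀ k : SymIdx m, ContinuousOn (fun s => Ψ s k) (Set.Ici 0) := by
    intro k
    match k with
    | Sum.inl p =>
      have : (fun s => Ψ s (Sum.inl p)) = fun s =>
          if p.1.1 = p.1.2 then -(1/2) * (y s p.1.1) ^ 2 else -(y s p.1.1 * y s p.1.2) :=
        funext (fun s => hΨ1 s p)
      rw [this]
      split_ifs with hp
      · exact continuousOn_const.mul ((hycoord p.1.1).pow 2)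
      · exact ((hycoord p.1.1).mul (hycoord p.1.2)).neg
    | Sum.inr i =>
      have : (fun s => Ψ s (Sum.inr i)) = fun s => y s i := funext (fun s => hΨ2 s i)
      rw [this]
      exact hycoord i
  have hFcont : ContinuousOn F (Set.Ici 0) := by
    have : F = fun s => c1 - (1/2) * ⟪y s - x s, T (y s - x s)⟫ := by
      funext s; rw [hF s, hTapply]
    rw [this]
    apply ContinuousOn.sub continuousOn_const
    apply ContinuousOn.mul continuousOn_const
    exact ContinuousOn.inner (hycont.sub hxcont)
      (T.continuous.comp_continuousOn (hycont.sub hxcont))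
  have hdcont : ContinuousOn d (Set.Ici 0) := by
    apply ContinuousOn.sub continuousOn_const
    apply ContinuousOn.mul continuousOn_const
    exact ContinuousOn.inner hxcont (T.continuous.comp_continuousOn hxcont)
  -- now the main estimate
  refine ⟨|c1| + (1/2) * ‖T‖ * M₄' ^ 2, by positivity, a, ha, ?_⟩
  intro t ht
  have huIcc : Set.uIcc (0:ℝ) t ⊆ Set.Ici 0 := by
    rw [Set.uIcc_of_le ht]
    exact Set.Icc_subset_Ici_self
  -- |d s| bound
  have hdb : ∀ s : ℝ, 0 ≤ s → |d s| ≤ |c1| + (1/2) * ‖T‖ * M₄' ^ 2 := by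
    intro s hs
    rw [hd]
    have h1 : |⟪x s, T (x s)⟫| ≤ ‖T‖ * M₄' ^ 2 := by
      calc |⟪x s, T (x s)⟫| ≤ ‖x s‖ * ‖T (x s)‖ := abs_real_inner_le_norm _ _
        _ ≤ ‖x s‖ * (‖T‖ * ‖x s‖) := by
            apply mul_le_mul_of_nonneg_left (T.le_opNorm _) (norm_nonneg _)
        _ ≤ M₄' * (‖T‖ * M₄') := by
            have hxs : ‖x s‖ ≤ M₄' := le_trans (hxb s hs) (le_max_left _ _)
            have hnn := norm_nonneg (x s)
            have hTnn := norm_nonneg T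
            have hsq : ‖x s‖ * ‖x s‖ ≤ M₄' * M₄' := mul_self_le_mul_self hnn hxs
            nlinarith [mul_le_mul_of_nonneg_left hsq hTnn]
        _ = ‖T‖ * M₄' ^ 2 := by ring
    calc |c1 - (1/2) * ⟪x s, T (x s)⟫| ≤ |c1| + |(1/2) * ⟪x s, T (x s)⟫| := abs_sub _ _
      _ ≤ |c1| + (1/2) * (‖T‖ * M₄' ^ 2) := by
          rw [abs_mul]
          have : |(1/2 : ℝ)| = 1/2 := by norm_num
          rw [this]
          linarith
      _ = |c1| + (1/2) * ‖T‖ * M₄' ^ 2 := by ring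
  -- integrability facts
  have hEcont : Continuous fun τ : ℝ => Real.exp (-a * (t - τ)) :=
    Real.continuous_exp.comp (continuous_const.mul (continuous_const.sub continuous_id))
  have hintF : IntervalIntegrable (fun τ => Real.exp (-a * (t - τ)) * F τ)
      MeasureTheory.volume 0 t :=
    (hEcont.continuousOn.mul (hFcont.mono huIcc)).intervalIntegrable
  have hintΨk : ∀ k : SymIdx m, IntervalIntegrable
      (fun τ => Real.exp (-a * (t - τ)) * Ψ τ k) MeasureTheory.volume 0 t :=
    fun k => (hEcont.continuousOn.mul ((hΨkcont k).mono huIcc)).intervalIntegrable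
  have hθΨcont : ContinuousOn (fun τ => (⟪θs t, Ψ τ⟫ : ℝ)) (Set.Ici 0) := by
    have hfe : (fun τ => (⟪θs t, Ψ τ⟫ : ℝ)) = fun τ => ∑ k, θs t k * Ψ τ k := by
      funext τ
      simp [PiLp.inner_apply, RCLike.inner_apply]
      congr 1 <;> exact Finset.sum_congr rfl (fun _ _ => mul_comm _ _)
    rw [hfe]
    apply continuousOn_finset_sum
    intro k _
    exact continuousOn_const.mul (hΨkcont k)
  have hintθΨ : IntervalIntegrable (fun τ => Real.exp (-a * (t - τ)) * ⟪θs t, Ψ τ⟫)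
      MeasureTheory.volume 0 t :=
    (hEcont.continuousOn.mul (hθΨcont.mono huIcc)).intervalIntegrable
  set g : ℝ → ℝ := fun τ => F τ - ⟪θs t, Ψ τ⟫ with hgdef
  have hgcont : ContinuousOn g (Set.Ici 0) := hFcont.sub hθΨcont
  have hintEg : IntervalIntegrable (fun τ => Real.exp (-a * (t - τ)) * g τ)
      MeasureTheory.volume 0 t :=
    (hEcont.continuousOn.mul (hgcont.mono huIcc)).intervalIntegrable
  have hintE : IntervalIntegrable (fun τ => Real.exp (-a * (t - τ)))
      MeasureTheory.volume 0 t := hEcont.intervalIntegrable _ _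
  -- step A : inner product through the filter
  have hstepA : ⟪θs t, φ t⟫ = ⟪θs t, Ψ t⟫
      - a * ∫ τ in (0:ℝ)..t, Real.exp (-a * (t - τ)) * ⟪θs t, Ψ τ⟫ := by
    have hsum : ∑ k : SymIdx m, (θs t k * ∫ τ in (0:ℝ)..t, Real.exp (-a * (t - τ)) * Ψ τ k)
        = ∫ τ in (0:ℝ)..t, Real.exp (-a * (t - τ)) * ⟪θs t, Ψ τ⟫ := by
      have h1 : ∀ k ∈ Finset.univ,
          θs t k * ∫ τ in (0:ℝ)..t, Real.exp (-a * (t - τ)) * Ψ τ k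
          = ∫ τ in (0:ℝ)..t, θs t k * (Real.exp (-a * (t - τ)) * Ψ τ k) :=
        fun k _ => (intervalIntegral.integral_const_mul _ _).symm
      rw [Finset.sum_congr rfl h1, ← intervalIntegral.integral_finset_sum
        (fun k _ => (hintΨk k).const_mul _)]
      apply intervalIntegral.integral_congr
      intro τ _
      simp only [PiLp.inner_apply, RCLike.inner_apply, conj_trivial, Finset.mul_sum]
      apply Finset.sum_congr rfl
      intro k _
      ring
    calc ⟪θs t, φ t⟫ = ∑ k : SymIdx m, θs t k * φ t k := by
          simp [PiLp.inner_apply, RCLike.inner_apply]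
          congr 1 <;> exact Finset.sum_congr rfl (fun _ _ => mul_comm _ _)
      _ = ∑ k : SymIdx m, (θs t k * Ψ t k
            - a * (θs t k * ∫ τ in (0:ℝ)..t, Real.exp (-a * (t - τ)) * Ψ τ k)) := by
          apply Finset.sum_congr rfl
          intro k _
          rw [hφ t k]
          ring
      _ = ∑ k : SymIdx m, θs t k * Ψ t k
            - a * ∑ k : SymIdx m, (θs t k * ∫ τ in (0:ℝ)..t, Real.exp (-a * (t - τ)) * Ψ τ k) := by
          rw [Finset.sum_sub_distrib, Finset.mul_sum]
      _ = ⟪θs t, Ψ t⟫ - a * ∫ τ in (0:ℝ)..t, Real.exp (-a * (t - τ)) * ⟪θs t, Ψ τ⟫ := by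
          rw [hsum]
          have h9 : (⟪θs t, Ψ t⟫:ℝ) = ∑ k : SymIdx m, θs t k * Ψ t k := by
            simp [PiLp.inner_apply, RCLike.inner_apply]
            congr 1 <;> exact Finset.sum_congr rfl (fun _ _ => mul_comm _ _)
          rw [h9]
  -- step B
  have hsplit : z t - ⟪θs t, φ t⟫ = d t - a * ∫ τ in (0:ℝ)..t, Real.exp (-a * (t - τ)) * g τ := by
    rw [hz t, hstepA]
    have h1 : ∫ τ in (0:ℝ)..t, Real.exp (-a * (t - τ)) * g τ
        = (∫ τ in (0:ℝ)..t, Real.exp (-a * (t - τ)) * F τ)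
          - ∫ τ in (0:ℝ)..t, Real.exp (-a * (t - τ)) * ⟪θs t, Ψ τ⟫ := by
      rw [← intervalIntegral.integral_sub hintF hintθΨ]
      apply intervalIntegral.integral_congr
      intro τ _
      simp only [hgdef]
      ring
    rw [h1]
    have hkt := hkey t
    linarith
  -- step C
  have hstepC : d t - a * ∫ τ in (0:ℝ)..t, Real.exp (-a * (t - τ)) * g τ
      = d t * Real.exp (-a * t)
        + a * ∫ τ in (0:ℝ)..t, Real.exp (-a * (t - τ)) * (d t - g τ) := by
    have h2 : ∫ τ in (0:ℝ)..t, Real.exp (-a * (t - τ)) * (d t - g τ)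
        = d t * (∫ τ in (0:ℝ)..t, Real.exp (-a * (t - τ)))
          - ∫ τ in (0:ℝ)..t, Real.exp (-a * (t - τ)) * g τ := by
      rw [← intervalIntegral.integral_const_mul, ← intervalIntegral.integral_sub
        (hintE.const_mul _) hintEg]
      apply intervalIntegral.integral_congr
      intro τ _
      ring
    rw [h2, exp_filter_integral a t ha]
    field_simp
    ring
  -- pointwise bound on the integrand
  have hpt : ∀ τ ∈ Set.uIoc (0:ℝ) t,
      ‖Real.exp (-a * (t - τ)) * (d t - g τ)‖
        ≤ C * ε * ((t - τ) * Real.exp (-a * (t - τ))) := by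
    intro τ hτ
    rw [Set.uIoc_of_le ht] at hτ
    obtain ⟨hτ0, hτt⟩ := hτ
    have hτ0' : (0:ℝ) ≤ τ := le_of_lt hτ0
    have hxd : ‖x τ - x t‖ ≤ ε * (t - τ) := by
      have := hxlip τ t hτ0' ht
      rw [norm_sub_rev]
      rwa [abs_of_nonneg (by linarith)] at this
    -- rewrite g τ
    have hgτ : g τ = d τ + ⟪θs τ - θs t, Ψ τ⟫ := by
      simp only [hgdef]
      rw [inner_sub_left]
      have := hkey τ
      linarith
    -- bound |d t - d τ|
    have hdd : |d t - d τ| ≤ ‖T‖ * M₄' * (ε * (t - τ)) := by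
      have hid : d t - d τ = (1/2) * (⟪x τ - x t, T (x τ)⟫ + ⟪x t, T (x τ) - T (x t)⟫) := by
        simp only [hd]
        rw [inner_sub_left, inner_sub_right]
        ring
      rw [hid]
      have b1 : |⟪x τ - x t, T (x τ)⟫| ≤ (ε * (t - τ)) * (‖T‖ * M₄') := by
        calc |⟪x τ - x t, T (x τ)⟫| ≤ ‖x τ - x t‖ * ‖T (x τ)‖ := abs_real_inner_le_norm _ _
          _ ≤ (ε * (t - τ)) * (‖T‖ * M₄') := by
              apply mul_le_mul hxd _ (norm_nonneg _) (mul_nonneg hε (by linarith))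
              calc ‖T (x τ)‖ ≤ ‖T‖ * ‖x τ‖ := T.le_opNorm _
                _ ≤ ‖T‖ * M₄' := by
                    apply mul_le_mul_of_nonneg_left _ (norm_nonneg T)
                    exact le_trans (hxb τ hτ0') (le_max_left _ _)
      have b2 : |⟪x t, T (x τ) - T (x t)⟫| ≤ M₄' * (‖T‖ * (ε * (t - τ))) := by
        calc |⟪x t, T (x τ) - T (x t)⟫| ≤ ‖x t‖ * ‖T (x τ) - T (x t)‖ :=
              abs_real_inner_le_norm _ _
          _ ≤ M₄' * (‖T‖ * (ε * (t - τ))) := by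
              apply mul_le_mul (le_trans (hxb t ht) (le_max_left _ _)) _ (norm_nonneg _)
                hM₄'nonneg
              rw [← map_sub]
              calc ‖T (x τ - x t)‖ ≤ ‖T‖ * ‖x τ - x t‖ := T.le_opNorm _
                _ ≤ ‖T‖ * (ε * (t - τ)) :=
                    mul_le_mul_of_nonneg_left hxd (norm_nonneg T)
      calc |(1/2) * (⟪x τ - x t, T (x τ)⟫ + ⟪x t, T (x τ) - T (x t)⟫)|
          ≤ (1/2) * (|⟪x τ - x t, T (x τ)⟫| + |⟪x t, T (x τ) - T (x t)⟫|) := by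
            rw [abs_mul]
            have h5 : |(1/2:ℝ)| = 1/2 := by norm_num
            rw [h5]
            have := abs_add_le (⟪x τ - x t, T (x τ)⟫ : ℝ) (⟪x t, T (x τ) - T (x t)⟫ : ℝ)
            linarith
        _ ≤ ‖T‖ * M₄' * (ε * (t - τ)) := by linarith [b1, b2]
    -- bound the inner-product term
    have hip : |(⟪θs τ - θs t, Ψ τ⟫ : ℝ)| ≤ ‖T‖ * CΨ * (ε * (t - τ)) := by
      calc |(⟪θs τ - θs t, Ψ τ⟫ : ℝ)| ≤ ‖θs τ - θs t‖ * ‖Ψ τ‖ := abs_real_inner_le_norm _ _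
        _ ≤ (‖T‖ * (ε * (t - τ))) * CΨ := by
            apply mul_le_mul _ (hΨbound τ hτ0') (norm_nonneg _)
              (mul_nonneg (norm_nonneg T) (mul_nonneg hε (by linarith)))
            rw [hθdiff τ t, ← map_sub]
            calc ‖T (x τ - x t)‖ ≤ ‖T‖ * ‖x τ - x t‖ := T.le_opNorm _
              _ ≤ ‖T‖ * (ε * (t - τ)) := mul_le_mul_of_nonneg_left hxd (norm_nonneg T)
        _ = ‖T‖ * CΨ * (ε * (t - τ)) := by ring
    have habs : |d t - g τ| ≤ C * ε * (t - τ) := by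
      rw [hgτ]
      calc |d t - (d τ + ⟪θs τ - θs t, Ψ τ⟫)| ≤ |d t - d τ| + |(⟪θs τ - θs t, Ψ τ⟫ : ℝ)| := by
            have := abs_sub (d t - d τ) (⟪θs τ - θs t, Ψ τ⟫ : ℝ)
            have h7 : d t - (d τ + ⟪θs τ - θs t, Ψ τ⟫) = (d t - d τ) - ⟪θs τ - θs t, Ψ τ⟫ := by
              ring
            rw [h7]
            exact this
        _ ≤ ‖T‖ * M₄' * (ε * (t - τ)) + ‖T‖ * CΨ * (ε * (t - τ)) := add_le_add hdd hip
        _ = C * ε * (t - τ) := by rw [hC]; ring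
    rw [Real.norm_eq_abs, abs_mul, abs_of_pos (Real.exp_pos _)]
    calc Real.exp (-a * (t - τ)) * |d t - g τ|
        ≤ Real.exp (-a * (t - τ)) * (C * ε * (t - τ)) := by
          apply mul_le_mul_of_nonneg_left habs (le_of_lt (Real.exp_pos _))
      _ = C * ε * ((t - τ) * Real.exp (-a * (t - τ))) := by ring
  -- integral bound
  have hrampint : IntervalIntegrable (fun τ => C * ε * ((t - τ) * Real.exp (-a * (t - τ))))
      MeasureTheory.volume 0 t := by
    exact (continuous_const.mul
      ((continuous_const.sub continuous_id).mul hEcont)).intervalIntegrable _ _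
  have hIbound : |∫ τ in (0:ℝ)..t, Real.exp (-a * (t - τ)) * (d t - g τ)| ≤ C * ε * (1 / a ^ 2) := by
    have h1 := intervalIntegral.norm_integral_le_of_norm_le
      ht (MeasureTheory.ae_of_all _ fun τ hτ => hpt τ (Set.uIoc_of_le ht ▸ hτ)) hrampint
    rw [Real.norm_eq_abs] at h1
    have h2 : ∫ τ in (0:ℝ)..t, C * ε * ((t - τ) * Real.exp (-a * (t - τ)))
        = C * ε * ∫ τ in (0:ℝ)..t, (t - τ) * Real.exp (-a * (t - τ)) :=
      intervalIntegral.integral_const_mul _ _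
    have h3 : (0:ℝ) ≤ ∫ τ in (0:ℝ)..t, (t - τ) * Real.exp (-a * (t - τ)) := by
      apply intervalIntegral.integral_nonneg ht
      intro u hu
      exact mul_nonneg (by linarith [hu.2]) (le_of_lt (Real.exp_pos _))
    have h4 := exp_ramp_integral_le a t ha ht
    calc |∫ τ in (0:ℝ)..t, Real.exp (-a * (t - τ)) * (d t - g τ)|
        ≤ |∫ τ in (0:ℝ)..t, C * ε * ((t - τ) * Real.exp (-a * (t - τ)))| := h1.trans (le_abs_self _)
      _ = C * ε * ∫ τ in (0:ℝ)..t, (t - τ) * Real.exp (-a * (t - τ)) := by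
          rw [h2, abs_of_nonneg (mul_nonneg (mul_nonneg hCnonneg hε) h3)]
      _ ≤ C * ε * (1 / a ^ 2) := by
          apply mul_le_mul_of_nonneg_left h4 (mul_nonneg hCnonneg hε)
  -- assemble
  rw [hsplit, hstepC]
  have hfinal : |d t * Real.exp (-a * t)
      + a * ∫ τ in (0:ℝ)..t, Real.exp (-a * (t - τ)) * (d t - g τ)|
      ≤ (|c1| + (1/2) * ‖T‖ * M₄' ^ 2) * Real.exp (-a * t) + a * (C * ε * (1 / a ^ 2)) := by
    calc |d t * Real.exp (-a * t)
        + a * ∫ τ in (0:ℝ)..t, Real.exp (-a * (t - τ)) * (d t - g τ)|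
        ≤ |d t * Real.exp (-a * t)|
          + |a * ∫ τ in (0:ℝ)..t, Real.exp (-a * (t - τ)) * (d t - g τ)| := abs_add_le _ _
      _ ≤ (|c1| + (1/2) * ‖T‖ * M₄' ^ 2) * Real.exp (-a * t) + a * (C * ε * (1 / a ^ 2)) := by
          apply add_le_add
          · rw [abs_mul, abs_of_pos (Real.exp_pos _)]
            exact mul_le_mul_of_nonneg_right (hdb t ht) (le_of_lt (Real.exp_pos _))
          · rw [abs_mul, abs_of_pos ha]
            exact mul_le_mul_of_nonneg_left hIbound (le_of_lt ha)
  have hsimp : a * (C * ε * (1 / a ^ 2)) = (C / a) * ε := by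
    field_simp
  rw [hsimp] at hfinal
  calc |d t * Real.exp (-a * t)
      + a * ∫ τ in (0:ℝ)..t, Real.exp (-a * (t - τ)) * (d t - g τ)|
      ≤ (|c1| + (1/2) * ‖T‖ * M₄' ^ 2) * Real.exp (-a * t) + (C / a) * ε := by linarith
    _ ≤ (C / a + 1) * ε + (|c1| + (1/2) * ‖T‖ * M₄' ^ 2) * Real.exp (-a * t) := by
        have : (C / a) * ε ≤ (C / a + 1) * ε := by nlinarith
        linarith
end
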